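/- arXiv:2208.14994 — 2 statements merged into one kernel-verified Lean document; each statement's English description precedes it below -/
import Mathlib

section
/- Let p ∈ ℕ, h > 0, ℓ > 0 and set ℓ̂ = ℓ/h. Then the maximum value of the smoothed level set satisfies the two-sided bound ℓ̂ √(3/(π(p+1))) · exp( −3ℓ̂²/(4(p+1)) ) ≤ erf( √3 ℓ̂ / (2√(p+1)) ) ≤ ℓ̂ √(3/(π(p+1))). In particular, the maximum of the smoothed level set depends linearly on the relative feature size ℓ̂ up to a factor tending to 1 as ℓ̂ → 0, and is bounded above by a quantity decreasing in the B-spline order p. -/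
open MeasureTheory intervalIntegral

/-- The error function `erf t = (2/√π) ∫₀ᵗ exp(−s²) ds`. -/
noncomputable def erf (t : ℝ) : ℝ :=
  (2 / Real.sqrt Real.pi) * ∫ s in (0:ℝ)..t, Real.exp (-s ^ 2)

/-- For `t ≥ 0`, `t e^{-t²} ≤ ∫₀ᵗ e^{-s²} ds ≤ t`. -/
lemma integral_bounds (t : ℝ) (ht : 0 ≤ t) :
    t * Real.exp (-t ^ 2) ≤ (∫ s in (0:ℝ)..t, Real.exp (-s ^ 2)) ∧
    (∫ s in (0:ℝ)..t, Real.exp (-s ^ 2)) ≤ t := by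
  have hint : IntervalIntegrable (fun s => Real.exp (-s ^ 2)) volume 0 t :=
    (Real.continuous_exp.comp (by continuity)).intervalIntegrable 0 t
  constructor
  · have h1 : t * Real.exp (-t ^ 2) = ∫ _ in (0:ℝ)..t, Real.exp (-t ^ 2) := by
      simp [mul_comm]
    rw [h1]
    apply intervalIntegral.integral_mono_on ht (intervalIntegrable_const) hint
    intro x hx
    apply Real.exp_le_exp.2
    have := hx.1; have := hx.2
    nlinarith [sq_nonneg x, sq_nonneg t]
  · have h2 : t = ∫ _ in (0:ℝ)..t, (1:ℝ) := by simp
    nth_rewrite 2 [h2]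
    apply intervalIntegral.integral_mono_on ht hint (intervalIntegrable_const)
    intro x hx
    calc Real.exp (-x ^ 2) ≤ Real.exp 0 := Real.exp_le_exp.2 (by nlinarith [sq_nonneg x])
    _ = 1 := Real.exp_zero

/-- Two-sided bound on the maximum value of the smoothed level set in terms of the
relative feature size `ℓ̂ = ℓ/h`:
`ℓ̂ √(3/(π(p+1))) exp(−3ℓ̂²/(4(p+1))) ≤ erf(√3 ℓ̂/(2√(p+1))) ≤ ℓ̂ √(3/(π(p+1)))`. -/
theorem smoothed_max_two_sided_bound (p : ℕ) (h ℓ : ℝ) (hh : 0 < h) (hℓ : 0 < ℓ)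
    (lhat : ℝ) (hlhat : lhat = ℓ / h) :
    lhat * Real.sqrt (3 / (Real.pi * ((p : ℝ) + 1))) *
        Real.exp (-(3 * lhat ^ 2) / (4 * ((p : ℝ) + 1))) ≤
      erf (Real.sqrt 3 * lhat / (2 * Real.sqrt ((p : ℝ) + 1))) ∧
    erf (Real.sqrt 3 * lhat / (2 * Real.sqrt ((p : ℝ) + 1))) ≤
      lhat * Real.sqrt (3 / (Real.pi * ((p : ℝ) + 1))) := by
  have hp1 : (0:ℝ) < (p : ℝ) + 1 := by positivity
  have hlp : 0 < lhat := by rw [hlhat]; positivity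
  set t := Real.sqrt 3 * lhat / (2 * Real.sqrt ((p : ℝ) + 1)) with htdef
  have hsp : 0 < Real.sqrt ((p:ℝ)+1) := Real.sqrt_pos.2 hp1
  have ht : 0 ≤ t := by positivity
  have hsq : Real.sqrt ((p:ℝ)+1) ^ 2 = (p:ℝ)+1 := Real.sq_sqrt hp1.le
  have hsq3 : Real.sqrt 3 ^ 2 = 3 := Real.sq_sqrt (by norm_num)
  have hpi : 0 < Real.sqrt Real.pi := Real.sqrt_pos.2 Real.pi_pos
  have hA : lhat * Real.sqrt (3 / (Real.pi * ((p : ℝ) + 1))) = 2 / Real.sqrt Real.pi * t := by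
    rw [Real.sqrt_div (by norm_num : (0:ℝ) ≤ 3), Real.sqrt_mul Real.pi_pos.le, htdef]
    field_simp
  have ht2 : t ^ 2 = 3 * lhat ^ 2 / (4 * ((p:ℝ)+1)) := by
    rw [htdef]
    rw [div_pow, mul_pow, mul_pow, hsq, hsq3]
    norm_num
  have hE : Real.exp (-(3 * lhat ^ 2) / (4 * ((p : ℝ) + 1))) = Real.exp (-t ^ 2) := by
    rw [ht2]; ring_nf
  obtain ⟨h1, h2⟩ := integral_bounds t ht
  have hc : 0 < 2 / Real.sqrt Real.pi := by positivity
  constructor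
  · rw [hA, hE]
    calc 2 / Real.sqrt Real.pi * t * Real.exp (-t ^ 2)
        = 2 / Real.sqrt Real.pi * (t * Real.exp (-t ^ 2)) := by ring
      _ ≤ 2 / Real.sqrt Real.pi * ∫ s in (0:ℝ)..t, Real.exp (-s ^ 2) :=
          mul_le_mul_of_nonneg_left h1 hc.le
      _ = erf t := rfl
  · rw [hA]
    exact mul_le_mul_of_nonneg_left h2 hc.le
end

section
/- Let p ∈ ℕ with p ≥ 2, and let ℓ̂ ≤ 1/2 with ℓ̂ > 0. Then erf( √3 ℓ̂ / (2√(p+1)) ) < 1/2. Hence a geometric feature whose size is at most half the mesh size is lost in the spline-based segmentation with threshold 1/2, regardless of the order p ≥ 2 of the spline basis. -/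
open MeasureTheory intervalIntegral

lemma erf_le (t : ℝ) (ht : 0 ≤ t) : erf t ≤ (2 / Real.sqrt Real.pi) * t := by
  unfold erf
  have hπ : 0 < Real.sqrt Real.pi := Real.sqrt_pos.mpr Real.pi_pos
  have h1 : (∫ s in (0:ℝ)..t, Real.exp (-s ^ 2)) ≤ ∫ _ in (0:ℝ)..t, (1:ℝ) := by
    apply intervalIntegral.integral_mono_on ht
    · exact (Continuous.intervalIntegrable (by continuity) 0 t)
    · exact intervalIntegrable_const
    · intro x _
      have : -x ^ 2 ≤ 0 := by nlinarith
      calc Real.exp (-x ^ 2) ≤ Real.exp 0 := Real.exp_le_exp.mpr this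
        _ = 1 := Real.exp_zero
  have h2 : (∫ _ in (0:ℝ)..t, (1:ℝ)) = t := by simp
  have := h1.trans h2.le
  have h3 : 0 < 2 / Real.sqrt Real.pi := by positivity
  nlinarith

/-- A feature of relative size at most half the mesh size is lost in the spline-based
segmentation at threshold `1/2`, regardless of the spline degree `p ≥ 2`. -/
theorem small_feature_lost (p : ℕ) (hp : 2 ≤ p) (lhat : ℝ) (hpos : 0 < lhat)
    (hle : lhat ≤ 1 / 2) :
    erf (Real.sqrt 3 * lhat / (2 * Real.sqrt ((p : ℝ) + 1))) < 1 / 2 := by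
  set t := Real.sqrt 3 * lhat / (2 * Real.sqrt ((p : ℝ) + 1)) with ht
  have hs3 : 0 < Real.sqrt 3 := Real.sqrt_pos.mpr (by norm_num)
  have hsp : 0 < Real.sqrt ((p : ℝ) + 1) := Real.sqrt_pos.mpr (by positivity)
  have htpos : 0 < t := by positivity
  have hsle : Real.sqrt 3 ≤ Real.sqrt ((p : ℝ) + 1) := by
    apply Real.sqrt_le_sqrt
    have : (2 : ℝ) ≤ (p : ℝ) := by exact_mod_cast hp
    linarith
  have ht14 : t ≤ 1 / 4 := by
    rw [ht, div_le_iff₀ (by positivity)]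
    nlinarith
  have hπ : 1 < Real.sqrt Real.pi := by
    rw [show (1:ℝ) = Real.sqrt 1 by simp]
    exact Real.sqrt_lt_sqrt (by norm_num) (by linarith [Real.pi_gt_three])
  have hb := erf_le t htpos.le
  have : (2 / Real.sqrt Real.pi) * t < 1 / 2 := by
    rw [div_mul_eq_mul_div, div_lt_iff₀ (by linarith)]
    nlinarith
  linarith
end
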